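/- Uniqueness of the corresponding orthogonal point: let ξ₁, ξ₂, ξ₃ ∈ ℚ⁴ be linearly independent Chern characters. Then there is at most one triple (x, y, d) ∈ ℚ² × ℚ such that the rank-one character (1, x, y, d) satisfies (ξᵢ, (1,x,y,d)) = 0 for all i = 1, 2, 3. -/

import Mathlib

/-- The Euler pairing `(ζ,ζ') := χ(ζ·ζ')` on Chern characters `(r,a,b,c) ∈ ℚ⁴`
(recorded as functions `Fin 4 → ℚ`), computed explicitly from the product of Chern
characters on ℙ¹×ℙ¹. -/
def eulerPair (ξ ζ : Fin 4 → ℚ) : ℚ :=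
  ξ 0 * ζ 3 + ξ 3 * ζ 0 + ξ 1 * ζ 2 + ξ 2 * ζ 1 +
    ξ 0 * ζ 1 + ξ 1 * ζ 0 + ξ 0 * ζ 2 + ξ 2 * ζ 0 + ξ 0 * ζ 0

/-- Dot product with a fixed vector `w`, as a linear map. -/
def dotL (w : Fin 4 → ℚ) : (Fin 4 → ℚ) →ₗ[ℚ] ℚ where
  toFun v := ∑ i, w i * v i
  map_add' u v := by simp [mul_add, Finset.sum_add_distrib]
  map_smul' c v := by simp [Finset.mul_sum, mul_left_comm]

lemma euler_eq (ξ : Fin 4 → ℚ) (x y d : ℚ) :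
    eulerPair ξ ![1, x, y, d] = dotL ![d + x + y + 1, y + 1, x + 1, 1] ξ := by
  simp [eulerPair, dotL, Fin.sum_univ_four]
  ring

lemma dotL_single (w : Fin 4 → ℚ) (j : Fin 4) :
    dotL w (Pi.single j 1) = w j := by
  simp [dotL, Pi.single_apply, Finset.mul_sum]

lemma dotL_sub (w w' v : Fin 4 → ℚ) :
    dotL (fun i => w i - w' i) v = dotL w v - dotL w' v := by
  simp [dotL, sub_mul, Finset.sum_sub_distrib]

lemma aux (ξ₁ ξ₂ ξ₃ η φ : Fin 4 → ℚ)
    (h : LinearIndependent ℚ ![ξ₁, ξ₂, ξ₃])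
    (h1 : dotL η ξ₁ = 0) (h2 : dotL η ξ₂ = 0) (h3 : dotL η ξ₃ = 0)
    (h4 : η 3 = 0)
    (p1 : dotL φ ξ₁ = 0) (p2 : dotL φ ξ₂ = 0) (p3 : dotL φ ξ₃ = 0)
    (p4 : φ 3 = 1) : η = 0 := by
  by_contra hne
  obtain ⟨j, hj⟩ : ∃ j, η j ≠ 0 := by
    by_contra hc; push_neg at hc; exact hne (funext hc)
  have hsurj : Function.Surjective (dotL η) := by
    intro a
    refine ⟨(a / η j) • (Pi.single j (1:ℚ) : Fin 4 → ℚ), ?_⟩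
    rw [map_smul, dotL_single]
    rw [smul_eq_mul]; field_simp
  have hker : Module.finrank ℚ (LinearMap.ker (dotL η)) = 3 := by
    have h5 := (dotL η).finrank_range_add_finrank_ker
    rw [LinearMap.range_eq_top.mpr hsurj] at h5
    simp [Module.finrank_fin_fun] at h5
    omega
  set W := Submodule.span ℚ (Set.range ![ξ₁, ξ₂, ξ₃]) with hWdef
  have hW : Module.finrank ℚ W = 3 := by
    rw [finrank_span_eq_card h]; simp
  have hle : W ≤ LinearMap.ker (dotL η) := by
    rw [hWdef, Submodule.span_le]
    rintro _ ⟨i, rfl⟩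
    fin_cases i <;> simpa [LinearMap.mem_ker] using (by assumption : _)
  have heq : W = LinearMap.ker (dotL η) :=
    Submodule.eq_of_le_of_finrank_le hle (by rw [hker, hW])
  have he3 : (Pi.single (3 : Fin 4) (1 : ℚ)) ∈ W := by
    rw [heq, LinearMap.mem_ker, dotL_single, h4]
  have hWφ : W ≤ LinearMap.ker (dotL φ) := by
    rw [hWdef, Submodule.span_le]
    rintro _ ⟨i, rfl⟩
    fin_cases i <;> simpa [LinearMap.mem_ker] using (by assumption : _)
  have := hWφ he3
  rw [LinearMap.mem_ker, dotL_single, p4] at this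
  exact one_ne_zero this

/-- Uniqueness of the corresponding orthogonal point: if `ξ₁, ξ₂, ξ₃` are linearly
independent Chern characters, then there is at most one `(x,y,d)` such that the
rank-one character `(1,x,y,d)` is orthogonal to all three `ξᵢ`. -/
theorem orthogonal_point_unique (ξ₁ ξ₂ ξ₃ : Fin 4 → ℚ)
    (h : LinearIndependent ℚ ![ξ₁, ξ₂, ξ₃]) :
    ∀ x y d x' y' d' : ℚ,
      (eulerPair ξ₁ ![1, x, y, d] = 0 ∧ eulerPair ξ₂ ![1, x, y, d] = 0 ∧
        eulerPair ξ₃ ![1, x, y, d] = 0) →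
      (eulerPair ξ₁ ![1, x', y', d'] = 0 ∧ eulerPair ξ₂ ![1, x', y', d'] = 0 ∧
        eulerPair ξ₃ ![1, x', y', d'] = 0) →
      (x, y, d) = (x', y', d') := by
  intro x y d x' y' d' ⟨e1, e2, e3⟩ ⟨f1, f2, f3⟩
  rw [euler_eq] at e1 e2 e3 f1 f2 f3
  have hz : (fun i => ![d + x + y + 1, y + 1, x + 1, 1] i
      - ![d' + x' + y' + 1, y' + 1, x' + 1, 1] i) = (0 : Fin 4 → ℚ) := by
    refine aux ξ₁ ξ₂ ξ₃ _ _ h ?_ ?_ ?_ (by show (1:ℚ) - 1 = 0; norm_num) e1 e2 e3 (by rfl)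
    · rw [dotL_sub, e1, f1, sub_zero]
    · rw [dotL_sub, e2, f2, sub_zero]
    · rw [dotL_sub, e3, f3, sub_zero]
  have hx : x = x' := by have := congrFun hz 2; simp at this; linarith
  have hy : y = y' := by have := congrFun hz 1; simp at this; linarith
  have hd : d = d' := by have := congrFun hz 0; simp at this; linarith
  simp [hx, hy, hd]
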